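/- Let K be a field of characteristic different from 2 and 3, and let E be the elliptic curve y^2 = (x-a)(x-b)(x-c) over K with a, b, c in K pairwise distinct. Given a point P = (x_0, y_0) in E(K), there exists Q in E(K) with P = 2Q if and only if x_0 - a, x_0 - b, and x_0 - c are all squares in K. -/

import Mathlib

/-- The elliptic curve `y² = (x - a)(x - b)(x - c)` in Weierstrass (affine) form. -/
def cubicRootsCurve {K : Type*} [Field K] (a b c : K) : WeierstrassCurve.Affine K :=
  { a₁ := 0, a₂ := -(a + b + c), a₃ := 0, a₄ := a * b + b * c + c * a, a₆ := -(a * b * c) }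

namespace CubicRootsAux

variable {K : Type*} [Field K]

open Classical

lemma negY_eq (a b c x y : K) : (cubicRootsCurve a b c).negY x y = -y := by
  simp [cubicRootsCurve, WeierstrassCurve.Affine.negY]

lemma slope_eq (a b c x y : K) (hy : y ≠ (cubicRootsCurve a b c).negY x y) :
    (cubicRootsCurve a b c).slope x x y y
      = (3*x^2 - 2*(a+b+c)*x + (a*b+b*c+c*a))/(2*y) := by
  rw [WeierstrassCurve.Affine.slope_of_Y_ne rfl hy, negY_eq]
  simp only [cubicRootsCurve]
  congr 1 <;> ring

lemma equation_iff'' (a b c x y : K) :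
    (cubicRootsCurve a b c).Equation x y ↔ y^2 = (x-a)*(x-b)*(x-c) := by
  rw [WeierstrassCurve.Affine.equation_iff]
  simp only [cubicRootsCurve]
  constructor <;> intro h <;> linear_combination h

lemma nonsingular_of (a b c x y : K) (h2 : (2:K) ≠ 0) (hy : y ≠ 0)
    (h : y^2 = (x-a)*(x-b)*(x-c)) : (cubicRootsCurve a b c).Nonsingular x y := by
  rw [WeierstrassCurve.Affine.nonsingular_iff]
  refine ⟨(equation_iff'' ..).mpr h, Or.inr ?_⟩
  simp only [cubicRootsCurve]
  intro hcon
  exact hy ((mul_eq_zero.mp (show 2*y = 0 by linear_combination hcon)).resolve_left h2)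

lemma some_congr {W : WeierstrassCurve.Affine K} {x₁ y₁ x₂ y₂ : K}
    (h₁ : W.Nonsingular x₁ y₁) (hx : x₁ = x₂) (hy : y₁ = y₂) (h₂ : W.Nonsingular x₂ y₂) :
    WeierstrassCurve.Affine.Point.some x₁ y₁ h₁ = WeierstrassCurve.Affine.Point.some x₂ y₂ h₂ := by
  subst hx; subst hy; rfl

lemma addX_eq (a b c x y : K) (_h2 : (2:K) ≠ 0) (hy' : y ≠ (cubicRootsCurve a b c).negY x y) :
    (cubicRootsCurve a b c).addX x x ((cubicRootsCurve a b c).slope x x y y)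
      = ((3*x^2 - 2*(a+b+c)*x + (a*b+b*c+c*a))/(2*y))^2 + (a+b+c) - 2*x := by
  rw [slope_eq a b c x y hy']
  simp only [WeierstrassCurve.Affine.addX, cubicRootsCurve]
  ring

end CubicRootsAux

open Classical in
open WeierstrassCurve.Affine CubicRootsAux in
theorem stmt_3 {K : Type*} [Field K] (h2 : (2 : K) ≠ 0) (h3 : (3 : K) ≠ 0)
    (a b c : K) (hab : a ≠ b) (hbc : b ≠ c) (hac : a ≠ c)
    (x₀ y₀ : K) (hP : (cubicRootsCurve a b c).Nonsingular x₀ y₀) :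
    (∃ Q : (cubicRootsCurve a b c).Point,
        2 • Q = WeierstrassCurve.Affine.Point.some x₀ y₀ hP) ↔
      IsSquare (x₀ - a) ∧ IsSquare (x₀ - b) ∧ IsSquare (x₀ - c) := by
  constructor
  · rintro ⟨Q, hQeq⟩
    rcases Q with _ | @⟨x, y, hQ⟩
    · rw [← WeierstrassCurve.Affine.Point.zero_def, two_smul, zero_add] at hQeq
      rw [WeierstrassCurve.Affine.Point.zero_def] at hQeq
      cases hQeq
    · by_cases hy : y = (cubicRootsCurve a b c).negY x y
      · rw [two_smul, WeierstrassCurve.Affine.Point.add_self_of_Y_eq hy] at hQeq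
        rw [WeierstrassCurve.Affine.Point.zero_def] at hQeq
        cases hQeq
      · rw [two_smul, WeierstrassCurve.Affine.Point.add_self_of_Y_ne hy,
          WeierstrassCurve.Affine.Point.some.injEq] at hQeq
        obtain ⟨hx, -⟩ := hQeq
        have hy0 : y ≠ 0 := by
          intro h; exact hy (by rw [negY_eq, h, neg_zero])
        have key : y^2 = (x-a)*(x-b)*(x-c) :=
          (equation_iff'' a b c x y).mp hQ.1
        rw [addX_eq a b c x y h2 hy] at hx
        have h2y : (2:K)*y ≠ 0 := mul_ne_zero h2 hy0
        have hx2 : (3*x^2 - 2*(a+b+c)*x + (a*b+b*c+c*a))^2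
            = (x₀ - (a+b+c) + 2*x) * (2*y)^2 := by
          field_simp at hx
          linear_combination hx
        refine ⟨⟨(x^2 - 2*a*x + (a*(b+c) - b*c))/(2*y), ?_⟩,
          ⟨(x^2 - 2*b*x + (b*(a+c) - a*c))/(2*y), ?_⟩,
          ⟨(x^2 - 2*c*x + (c*(a+b) - a*b))/(2*y), ?_⟩⟩
        · rw [div_mul_div_comm, eq_div_iff (mul_ne_zero h2y h2y)]
          linear_combination -hx2 + (4*(b + c - 2*x)) * key
        · rw [div_mul_div_comm, eq_div_iff (mul_ne_zero h2y h2y)]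
          linear_combination -hx2 + (4*(a + c - 2*x)) * key
        · rw [div_mul_div_comm, eq_div_iff (mul_ne_zero h2y h2y)]
          linear_combination -hx2 + (4*(a + b - 2*x)) * key
  · rintro ⟨⟨α, hα⟩, ⟨β, hβ⟩, ⟨γ, hγ⟩⟩
    have ha : a = x₀ - α*α := by linear_combination -hα
    have hb : b = x₀ - β*β := by linear_combination -hβ
    have hc : c = x₀ - γ*γ := by linear_combination -hγ
    subst ha; subst hb; subst hc
    have hαβ : α + β ≠ 0 := by
      intro h; apply hab
      have h' : α = -β := by linear_combination h
      rw [h']; ring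
    have hβγ : β + γ ≠ 0 := by
      intro h; apply hbc
      have h' : β = -γ := by linear_combination h
      rw [h']; ring
    have hγα : γ + α ≠ 0 := by
      intro h; apply hac
      have h' : γ = -α := by linear_combination h
      rw [h']; ring
    set! A := x₀ - α*α with hA
    set! B := x₀ - β*β with hB
    set! C := x₀ - γ*γ with hC
    set x : K := x₀ + α*β + β*γ + γ*α with hxd
    set y : K := (α+β)*((β+γ)*(γ+α)) with hyd
    have hy0 : y ≠ 0 := mul_ne_zero hαβ (mul_ne_zero hβγ hγα)
    have heq : y^2 = (x - A)*(x - B)*(x - C) := by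
      rw [hxd, hyd, hA, hB, hC]; ring
    have hQ : (cubicRootsCurve A B C).Nonsingular x y :=
      nonsingular_of A B C x y h2 hy0 heq
    have hy : y ≠ (cubicRootsCurve A B C).negY x y := by
      rw [negY_eq]; intro h
      exact hy0 ((mul_eq_zero.mp (show 2*y = 0 by linear_combination h)).resolve_left h2)
    set L := (cubicRootsCurve A B C).slope x x y y with hL
    have hx3 : (cubicRootsCurve A B C).addX x x L = x₀ := by
      rw [hL, addX_eq A B C x y h2 hy, hA, hB, hC, hxd, hyd]
      field_simp
      ring
    have h₃ := WeierstrassCurve.Affine.nonsingular_add hQ hQ (fun h => hy h.2)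
    set y₃ := (cubicRootsCurve A B C).addY x x y L with hy3
    have key3 : y₃^2 = (x₀ - A)*(x₀ - B)*(x₀ - C) := by
      have := (equation_iff'' A B C _ _).mp h₃.1
      rwa [hx3] at this
    have keyP : y₀^2 = (x₀ - A)*(x₀ - B)*(x₀ - C) :=
      (equation_iff'' A B C _ _).mp hP.1
    have hzero : (y₃ - y₀)*(y₃ + y₀) = 0 := by
      linear_combination key3 - keyP
    rcases mul_eq_zero.mp hzero with h | h
    · refine ⟨WeierstrassCurve.Affine.Point.some _ _ hQ, ?_⟩
      rw [two_smul, WeierstrassCurve.Affine.Point.add_self_of_Y_ne hy]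
      exact some_congr _ hx3 (by linear_combination h) hP
    · refine ⟨-WeierstrassCurve.Affine.Point.some _ _ hQ, ?_⟩
      rw [two_smul, ← neg_add, WeierstrassCurve.Affine.Point.add_self_of_Y_ne hy,
        WeierstrassCurve.Affine.Point.neg_some]
      refine some_congr _ hx3 ?_ hP
      rw [negY_eq]
      linear_combination -h
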